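/- arXiv:1704.05644 — 3 statements merged into one kernel-verified Lean document; each statement's English description precedes it below -/
import Mathlib

section
/- Let φ : ℝ₊ → ℝ be continuous with φ > 0 on ℝ₊, and let Φ(y, t) denote the flow of the ODE dΦ/dt = φ(Φ) with Φ(y,0) = y, assumed well-defined for all t ≥ 0. Suppose φ ≤ M on ℝ₊ for some M > 0. Then for all y > 0, h > 0 and u > 0: Φ(y + h, u) - Φ(y, u) ≥ (m/M)·h, where m = min of φ on [Φ(y,u), Φ(y,u) + h]. Consequently, whenever the partial derivative ∂Φ/∂y(y,u) exists, it satisfies ∂Φ/∂y(y,u) ≥ (min_{[0, y+Mu]} φ)/M. -/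
open MeasureTheory Set intervalIntegral

/-- Conditional regularity: if the integrand is integrable on `[0,t]`, then `Φ y`
is continuous on `[0,t]` and stays `≥ y` there. -/
lemma flow_aux1 (φ : ℝ → ℝ) (hφpos : ∀ y, 0 ≤ y → 0 < φ y)
    (Φ : ℝ → ℝ → ℝ)
    (hflow : ∀ y, 0 ≤ y → ∀ t, 0 ≤ t → Φ y t = y + ∫ s in (0:ℝ)..t, φ (Φ y s))
    {y t : ℝ} (hy : 0 < y) (ht : 0 ≤ t)
    (hInt : IntervalIntegrable (fun s => φ (Φ y s)) volume 0 t) :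
    ContinuousOn (Φ y) (Icc 0 t) ∧ ∀ s ∈ Icc (0:ℝ) t, y ≤ Φ y s := by
  set f : ℝ → ℝ := fun s => φ (Φ y s) with hf
  have hcontF : ContinuousOn (fun x => ∫ s in (0:ℝ)..x, f s) (Icc 0 t) := by
    have := intervalIntegral.continuousOn_primitive_interval' hInt
      (left_mem_uIcc (a := (0:ℝ)) (b := t))
    rwa [uIcc_of_le ht] at this
  have hcont : ContinuousOn (Φ y) (Icc 0 t) := by
    apply (continuousOn_const.add hcontF).congr
    intro x hx
    exact hflow y hy.le x hx.1
  refine ⟨hcont, ?_⟩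
  -- first show positivity
  have hpos : ∀ s ∈ Icc (0:ℝ) t, 0 < Φ y s := by
    by_contra hcon
    push_neg at hcon
    obtain ⟨s₀, hs₀, hs₀le⟩ := hcon
    set A : Set ℝ := {s | s ∈ Icc (0:ℝ) t ∧ Φ y s ≤ 0} with hA
    have hAne : A.Nonempty := ⟨s₀, hs₀, hs₀le⟩
    have hAclosed : IsClosed A := by
      have : A = Icc (0:ℝ) t ∩ Φ y ⁻¹' (Iic 0) := rfl
      rw [this]
      exact hcont.preimage_isClosed_of_isClosed isClosed_Icc isClosed_Iic
    have hAbdd : BddBelow A := ⟨0, fun x hx => hx.1.1⟩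
    set r := sInf A with hr
    have hrA : r ∈ A := hAclosed.csInf_mem hAne hAbdd
    have hr0 : 0 ≤ r := hrA.1.1
    have hrt : r ≤ t := hrA.1.2
    have hbefore : ∀ s ∈ Ico (0:ℝ) r, 0 < Φ y s := by
      intro s hs
      by_contra hc
      push_neg at hc
      have : s ∈ A := ⟨⟨hs.1, le_trans hs.2.le hrt⟩, hc⟩
      exact absurd (csInf_le hAbdd this) (not_le.mpr hs.2)
    have hae : 0 ≤ᵐ[volume.restrict (Icc 0 r)] f := by
      have hne : ∀ᵐ (u : ℝ), u ≠ r := by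
        have : volume ({r} : Set ℝ) = 0 := measure_singleton r
        filter_upwards [measure_eq_zero_iff_ae_notMem.mp this] with u hu
        simpa using hu
      rw [Filter.EventuallyLE, ae_restrict_iff' measurableSet_Icc]
      filter_upwards [hne] with u hu hmem
      rcases lt_or_eq_of_le hmem.2 with h | h
      · exact (hφpos _ (hbefore u ⟨hmem.1, h⟩).le).le
      · exact absurd h hu
    have hΦr : y ≤ Φ y r := by
      rw [hflow y hy.le r hr0]
      have : (0:ℝ) ≤ ∫ s in (0:ℝ)..r, f s :=
        intervalIntegral.integral_nonneg_of_ae_restrict hr0 hae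
      linarith
    linarith [hrA.2]
  intro s hs
  rw [hflow y hy.le s hs.1]
  have hnn : (0:ℝ) ≤ ∫ u in (0:ℝ)..s, f u := by
    apply intervalIntegral.integral_nonneg hs.1
    intro u hu
    exact (hφpos _ (hpos u ⟨hu.1, le_trans hu.2 hs.2⟩).le).le
  linarith

/-- Global integrability of the integrand. -/
lemma flow_int (φ : ℝ → ℝ) (M : ℝ) (hM : 0 < M)
    (hφc : Continuous φ) (hφpos : ∀ y, 0 ≤ y → 0 < φ y) (hφM : ∀ y, 0 ≤ y → φ y ≤ M)
    (Φ : ℝ → ℝ → ℝ)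
    (hflow : ∀ y, 0 ≤ y → ∀ t, 0 ≤ t → Φ y t = y + ∫ s in (0:ℝ)..t, φ (Φ y s))
    {y : ℝ} (hy : 0 < y) :
    ∀ t, 0 ≤ t → IntervalIntegrable (fun s => φ (Φ y s)) volume 0 t := by
  set f : ℝ → ℝ := fun s => φ (Φ y s) with hf
  by_contra hcon
  push_neg at hcon
  obtain ⟨t₀, ht₀, hni⟩ := hcon
  set B : Set ℝ := {t | 0 ≤ t ∧ IntervalIntegrable f volume 0 t} with hB
  have hB0 : (0:ℝ) ∈ B := ⟨le_refl 0, IntervalIntegrable.refl⟩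
  have hBne : B.Nonempty := ⟨0, hB0⟩
  have hmono : ∀ s t : ℝ, 0 ≤ s → s ≤ t → t ∈ B → s ∈ B := by
    intro s t hs hst htB
    exact ⟨hs, htB.2.mono_set (uIcc_subset_uIcc (by simp) (by
      rw [uIcc_of_le (hs.trans hst)]; exact ⟨hs, hst⟩))⟩
  have hBbdd : BddAbove B := by
    refine ⟨t₀, fun b hb => ?_⟩
    by_contra hc
    push_neg at hc
    exact hni (hmono t₀ b ht₀ hc.le hb).2
  set τ := sSup B with hτ
  have hτ0 : 0 ≤ τ := le_csSup hBbdd hB0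
  have hafter : ∀ s, τ < s → Φ y s = y := by
    intro s hs
    have hs0 : 0 ≤ s := hτ0.trans hs.le
    have : s ∉ B := fun h => absurd (le_csSup hBbdd h) (not_le.mpr hs)
    have hnint : ¬ IntervalIntegrable f volume 0 s := fun h => this ⟨hs0, h⟩
    rw [hflow y hy.le s hs0, intervalIntegral.integral_undef hnint, add_zero]
  have hbefore : ∀ s, 0 ≤ s → s < τ → s ∈ B := by
    intro s hs hsτ
    obtain ⟨b, hbB, hsb⟩ := exists_lt_of_lt_csSup hBne hsτ
    exact hmono s b hs hsb.le hbB
  -- Φ y is continuous and ≥ y on [0, τ)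
  have hreg : ∀ s ∈ Ico (0:ℝ) τ, ContinuousWithinAt (Φ y) (Ico 0 τ) s ∧ y ≤ Φ y s := by
    intro s hs
    obtain ⟨b, hbB, hsb⟩ := exists_lt_of_lt_csSup hBne hs.2
    have hb0 : 0 ≤ b := hs.1.trans hsb.le
    have ⟨hc, hge⟩ := flow_aux1 φ hφpos Φ hflow hy hb0 hbB.2
    constructor
    · have h1 : ContinuousWithinAt (Φ y) (Icc 0 b) s := hc s ⟨hs.1, hsb.le⟩
      apply h1.mono_of_mem_nhdsWithin
      have : Ico (0:ℝ) τ ∩ Iio b ∈ nhdsWithin s (Ico 0 τ) :=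
        inter_mem_nhdsWithin _ (Iio_mem_nhds hsb)
      apply Filter.mem_of_superset this
      rintro x ⟨hx1, hx2⟩
      exact ⟨hx1.1, le_of_lt hx2⟩
    · exact hge s ⟨hs.1, hsb.le⟩
  -- integrability on [0, τ+1]
  have hint1 : IntegrableOn f (Ioc 0 τ) := by
    rcases eq_or_lt_of_le hτ0 with h0 | h0
    · rw [← h0]; simp
    · have hcont : ContinuousOn f (Ioo 0 τ) := by
        intro s hs
        have := (hreg s ⟨hs.1.le, hs.2⟩).1
        have hΦcwa : ContinuousWithinAt (Φ y) (Ioo 0 τ) s :=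
          this.mono (fun x hx => ⟨hx.1.le, hx.2⟩)
        exact (hφc.continuousAt.comp_continuousWithinAt hΦcwa)
      have hmeas : AEStronglyMeasurable f (volume.restrict (Ioo 0 τ)) :=
        hcont.aestronglyMeasurable measurableSet_Ioo
      have hbdd : ∀ᵐ x ∂(volume.restrict (Ioo 0 τ)), ‖f x‖ ≤ M := by
        rw [ae_restrict_iff' measurableSet_Ioo]
        refine Filter.Eventually.of_forall (fun x hx => ?_)
        have hge := (hreg x ⟨hx.1.le, hx.2⟩).2
        have h0x : 0 ≤ Φ y x := le_trans hy.le hge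
        rw [Real.norm_eq_abs, abs_of_nonneg (hφpos _ h0x).le]
        exact hφM _ h0x
      have hIoo : IntegrableOn f (Ioo 0 τ) := by
        refine Integrable.mono' ((integrableOn_const_iff (C := M)).mpr (Or.inr ?_)) hmeas hbdd
        simp [Real.volume_Ioo]
      exact hIoo.congr_set_ae Ioo_ae_eq_Ioc.symm
  have hint2 : IntegrableOn f (Ioc τ (τ+1)) := by
    have : EqOn f (fun _ => φ y) (Ioc τ (τ+1)) := by
      intro s hs
      simp only [hf]
      rw [hafter s hs.1]
    exact ((integrableOn_const_iff (C := φ y)).mpr (Or.inr (by simp))).congr_fun (fun s hs => (this hs).symm)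
      measurableSet_Ioc
  have hfin : IntervalIntegrable f volume 0 (τ+1) := by
    rw [intervalIntegrable_iff_integrableOn_Ioc_of_le (by linarith)]
    have : Ioc (0:ℝ) (τ+1) = Ioc 0 τ ∪ Ioc τ (τ+1) :=
      (Ioc_union_Ioc_eq_Ioc hτ0 (by linarith)).symm
    rw [this]
    exact hint1.union hint2
  have : τ + 1 ∈ B := ⟨by linarith, hfin⟩
  linarith [le_csSup hBbdd this]

lemma flow_ge (φ : ℝ → ℝ) (M : ℝ) (hM : 0 < M)
    (hφc : Continuous φ) (hφpos : ∀ y, 0 ≤ y → 0 < φ y) (hφM : ∀ y, 0 ≤ y → φ y ≤ M)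
    (Φ : ℝ → ℝ → ℝ)
    (hflow : ∀ y, 0 ≤ y → ∀ t, 0 ≤ t → Φ y t = y + ∫ s in (0:ℝ)..t, φ (Φ y s))
    {y : ℝ} (hy : 0 < y) {t : ℝ} (ht : 0 ≤ t) : y ≤ Φ y t :=
  (flow_aux1 φ hφpos Φ hflow hy ht
    (flow_int φ M hM hφc hφpos hφM Φ hflow hy t ht)).2 t ⟨ht, le_refl t⟩

lemma flow_cont (φ : ℝ → ℝ) (M : ℝ) (hM : 0 < M)
    (hφc : Continuous φ) (hφpos : ∀ y, 0 ≤ y → 0 < φ y) (hφM : ∀ y, 0 ≤ y → φ y ≤ M)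
    (Φ : ℝ → ℝ → ℝ)
    (hflow : ∀ y, 0 ≤ y → ∀ t, 0 ≤ t → Φ y t = y + ∫ s in (0:ℝ)..t, φ (Φ y s))
    {y : ℝ} (hy : 0 < y) : ContinuousOn (Φ y) (Ici 0) := by
  intro x hx
  have hx0 : (0:ℝ) ≤ x := hx
  have hc := (flow_aux1 φ hφpos Φ hflow hy (by linarith : (0:ℝ) ≤ x + 1)
    (flow_int φ M hM hφc hφpos hφM Φ hflow hy (x+1) (by linarith))).1
  have h1 : ContinuousWithinAt (Φ y) (Icc 0 (x+1)) x := hc x ⟨hx0, by linarith⟩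
  apply h1.mono_of_mem_nhdsWithin
  have : Ici (0:ℝ) ∩ Iic (x+1) ∈ nhdsWithin x (Ici 0) :=
    inter_mem_nhdsWithin _ (Iic_mem_nhds (by linarith))
  exact Filter.mem_of_superset this (fun z hz => ⟨hz.1, hz.2⟩)

lemma flow_diff (φ : ℝ → ℝ) (M : ℝ) (hM : 0 < M)
    (hφc : Continuous φ) (hφpos : ∀ y, 0 ≤ y → 0 < φ y) (hφM : ∀ y, 0 ≤ y → φ y ≤ M)
    (Φ : ℝ → ℝ → ℝ)
    (hflow : ∀ y, 0 ≤ y → ∀ t, 0 ≤ t → Φ y t = y + ∫ s in (0:ℝ)..t, φ (Φ y s))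
    {y : ℝ} (hy : 0 < y) {a b : ℝ} (ha : 0 ≤ a) (hab : a ≤ b) :
    Φ y b = Φ y a + ∫ s in a..b, φ (Φ y s) := by
  have hb : 0 ≤ b := ha.trans hab
  have h1 : IntervalIntegrable (fun s => φ (Φ y s)) volume 0 a :=
    flow_int φ M hM hφc hφpos hφM Φ hflow hy a ha
  have h2 : IntervalIntegrable (fun s => φ (Φ y s)) volume a b :=
    (flow_int φ M hM hφc hφpos hφM Φ hflow hy b hb).mono_set
      (uIcc_subset_uIcc (by rw [uIcc_of_le hb]; exact ⟨ha, hab⟩)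
        (by rw [uIcc_of_le hb]; exact ⟨hb, le_refl b⟩))
  have := intervalIntegral.integral_add_adjacent_intervals h1 h2
  rw [hflow y hy.le b hb, hflow y hy.le a ha, ← this]
  ring

lemma flow_incr (φ : ℝ → ℝ) (M : ℝ) (hM : 0 < M)
    (hφc : Continuous φ) (hφpos : ∀ y, 0 ≤ y → 0 < φ y) (hφM : ∀ y, 0 ≤ y → φ y ≤ M)
    (Φ : ℝ → ℝ → ℝ)
    (hflow : ∀ y, 0 ≤ y → ∀ t, 0 ≤ t → Φ y t = y + ∫ s in (0:ℝ)..t, φ (Φ y s))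
    {y : ℝ} (hy : 0 < y) {a b : ℝ} (ha : 0 ≤ a) (hab : a ≤ b) :
    Φ y a ≤ Φ y b := by
  rw [flow_diff φ M hM hφc hφpos hφM Φ hflow hy ha hab]
  have : (0:ℝ) ≤ ∫ s in a..b, φ (Φ y s) := by
    apply intervalIntegral.integral_nonneg hab
    intro u hu
    have h0u : (0:ℝ) ≤ u := ha.trans hu.1
    exact (hφpos _ ((flow_ge φ M hM hφc hφpos hφM Φ hflow hy h0u).trans' hy.le)).le
  linarith

lemma flow_lip (φ : ℝ → ℝ) (M : ℝ) (hM : 0 < M)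
    (hφc : Continuous φ) (hφpos : ∀ y, 0 ≤ y → 0 < φ y) (hφM : ∀ y, 0 ≤ y → φ y ≤ M)
    (Φ : ℝ → ℝ → ℝ)
    (hflow : ∀ y, 0 ≤ y → ∀ t, 0 ≤ t → Φ y t = y + ∫ s in (0:ℝ)..t, φ (Φ y s))
    {y : ℝ} (hy : 0 < y) {a b : ℝ} (ha : 0 ≤ a) (hab : a ≤ b) :
    Φ y b ≤ Φ y a + M * (b - a) := by
  rw [flow_diff φ M hM hφc hφpos hφM Φ hflow hy ha hab]
  have hb : 0 ≤ b := ha.trans hab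
  have h2 : IntervalIntegrable (fun s => φ (Φ y s)) volume a b :=
    (flow_int φ M hM hφc hφpos hφM Φ hflow hy b hb).mono_set
      (uIcc_subset_uIcc (by rw [uIcc_of_le hb]; exact ⟨ha, hab⟩)
        (by rw [uIcc_of_le hb]; exact ⟨hb, le_refl b⟩))
  have hle : (∫ s in a..b, φ (Φ y s)) ≤ ∫ _ in a..b, M := by
    apply intervalIntegral.integral_mono_on hab h2 intervalIntegrable_const
    intro x hx
    have h0x : (0:ℝ) ≤ x := ha.trans hx.1
    exact hφM _ ((flow_ge φ M hM hφc hφpos hφM Φ hflow hy h0x).trans' hy.le)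
  rw [intervalIntegral.integral_const, smul_eq_mul] at hle
  linarith [hle]

lemma flow_semigroup (φ : ℝ → ℝ) (M : ℝ) (hM : 0 < M)
    (hφc : Continuous φ) (hφpos : ∀ y, 0 ≤ y → 0 < φ y) (hφM : ∀ y, 0 ≤ y → φ y ≤ M)
    (Φ : ℝ → ℝ → ℝ)
    (hflow : ∀ y, 0 ≤ y → ∀ t, 0 ≤ t → Φ y t = y + ∫ s in (0:ℝ)..t, φ (Φ y s))
    (huniq : ∀ y, 0 ≤ y → ∀ g : ℝ → ℝ, ContinuousOn g (Set.Ici 0) →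
      (∀ t, 0 ≤ t → g t = y + ∫ s in (0:ℝ)..t, φ (g s)) → ∀ t, 0 ≤ t → g t = Φ y t)
    {y : ℝ} (hy : 0 < y) {r t : ℝ} (hr : 0 ≤ r) (ht : 0 ≤ t) :
    Φ y (r + t) = Φ (Φ y r) t := by
  set z := Φ y r with hz
  have hzy : y ≤ z := flow_ge φ M hM hφc hφpos hφM Φ hflow hy hr
  have hz0 : 0 ≤ z := hy.le.trans hzy
  set g : ℝ → ℝ := fun t => Φ y (r + t) with hg
  have hgc : ContinuousOn g (Ici 0) := by
    apply (flow_cont φ M hM hφc hφpos hφM Φ hflow hy).comp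
      (continuousOn_const.add continuousOn_id)
    intro x hx
    simp only [mem_Ici, id_eq, Pi.add_apply] at *
    linarith
  have hgeq : ∀ t, 0 ≤ t → g t = z + ∫ s in (0:ℝ)..t, φ (g s) := by
    intro t ht
    have h1 : Φ y (r + t) = Φ y r + ∫ s in r..(r+t), φ (Φ y s) :=
      flow_diff φ M hM hφc hφpos hφM Φ hflow hy hr (by linarith)
    have h2 : (∫ s in (0:ℝ)..t, φ (Φ y (r + s))) = ∫ s in r..(r+t), φ (Φ y s) := by
      have := intervalIntegral.integral_comp_add_left (a := (0:ℝ)) (b := t)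
        (fun s => φ (Φ y s)) r
      rw [add_zero] at this
      exact this
    simp only [hg]
    rw [h1, ← h2]
  exact huniq z hz0 g hgc hgeq t ht

lemma flow_mono (φ : ℝ → ℝ) (M : ℝ) (hM : 0 < M)
    (hφc : Continuous φ) (hφpos : ∀ y, 0 ≤ y → 0 < φ y) (hφM : ∀ y, 0 ≤ y → φ y ≤ M)
    (Φ : ℝ → ℝ → ℝ)
    (hflow : ∀ y, 0 ≤ y → ∀ t, 0 ≤ t → Φ y t = y + ∫ s in (0:ℝ)..t, φ (Φ y s))
    (huniq : ∀ y, 0 ≤ y → ∀ g : ℝ → ℝ, ContinuousOn g (Set.Ici 0) →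
      (∀ t, 0 ≤ t → g t = y + ∫ s in (0:ℝ)..t, φ (g s)) → ∀ t, 0 ≤ t → g t = Φ y t)
    {y₁ y₂ : ℝ} (hy₁ : 0 < y₁) (h12 : y₁ ≤ y₂) {t : ℝ} (ht : 0 ≤ t) :
    Φ y₁ t ≤ Φ y₂ t := by
  have hy₂ : 0 < y₂ := lt_of_lt_of_le hy₁ h12
  have hΦ0 : ∀ y : ℝ, 0 < y → Φ y 0 = y := by
    intro y hy
    rw [hflow y hy.le 0 (le_refl 0), intervalIntegral.integral_same, add_zero]
  by_contra hcon
  push_neg at hcon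
  have ht0 : 0 < t := by
    rcases eq_or_lt_of_le ht with h | h
    · rw [← h, hΦ0 y₁ hy₁, hΦ0 y₂ hy₂] at hcon; linarith
    · exact h
  set A : Set ℝ := {s | s ∈ Icc (0:ℝ) t ∧ Φ y₁ s ≤ Φ y₂ s} with hA
  have hAne : A.Nonempty := ⟨0, ⟨le_refl 0, ht⟩, by rw [hΦ0 y₁ hy₁, hΦ0 y₂ hy₂]; exact h12⟩
  have hc₁ := flow_cont φ M hM hφc hφpos hφM Φ hflow hy₁
  have hc₂ := flow_cont φ M hM hφc hφpos hφM Φ hflow hy₂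
  have hAclosed : IsClosed A := by
    have hcont : ContinuousOn (fun s => Φ y₁ s - Φ y₂ s) (Icc 0 t) :=
      ((hc₁.mono (fun x (hx : x ∈ Icc (0:ℝ) t) => hx.1)).sub
        (hc₂.mono (fun x (hx : x ∈ Icc (0:ℝ) t) => hx.1)))
    have heq : A = Icc (0:ℝ) t ∩ (fun s => Φ y₁ s - Φ y₂ s) ⁻¹' (Iic 0) := by
      ext x
      simp only [hA, mem_setOf_eq, mem_inter_iff, mem_preimage, mem_Iic, sub_nonpos]
    rw [heq]
    exact hcont.preimage_isClosed_of_isClosed isClosed_Icc isClosed_Iic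
  have hAbdd : BddAbove A := ⟨t, fun x hx => hx.1.2⟩
  set r := sSup A with hr
  have hrA : r ∈ A := hAclosed.csSup_mem hAne hAbdd
  have hr0 : 0 ≤ r := hrA.1.1
  have hrt : r ≤ t := hrA.1.2
  have hrne : r ≠ t := by
    intro h
    rw [h] at hrA
    exact absurd hrA.2 (not_le.mpr hcon)
  have hrlt : r < t := lt_of_le_of_ne hrt hrne
  -- after r, strict reversed inequality
  have hafter : ∀ s, r < s → s ≤ t → Φ y₂ s < Φ y₁ s := by
    intro s hs1 hs2
    by_contra hc
    push_neg at hc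
    have : s ∈ A := ⟨⟨hr0.trans hs1.le, hs2⟩, hc⟩
    exact absurd (le_csSup hAbdd this) (not_le.mpr hs1)
  -- limits from the right give Φ y₂ r ≤ Φ y₁ r
  have hrev : Φ y₂ r ≤ Φ y₁ r := by
    have hne : (nhdsWithin r (Ioi r)).NeBot := nhdsGT_neBot r
    have hsub : Ioi r ⊆ Ici (0:ℝ) := fun x hx => le_trans hr0 (le_of_lt hx)
    have h1 : Filter.Tendsto (Φ y₁) (nhdsWithin r (Ioi r)) (nhds (Φ y₁ r)) :=
      (hc₁ r hr0).mono_left (nhdsWithin_mono r hsub)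
    have h2 : Filter.Tendsto (Φ y₂) (nhdsWithin r (Ioi r)) (nhds (Φ y₂ r)) :=
      (hc₂ r hr0).mono_left (nhdsWithin_mono r hsub)
    apply le_of_tendsto_of_tendsto h2 h1
    have hev : Iio t ∈ nhdsWithin r (Ioi r) :=
      nhdsWithin_le_nhds (Iio_mem_nhds hrlt)
    filter_upwards [hev, self_mem_nhdsWithin] with x hx1 hx2
    exact (hafter x hx2 (le_of_lt hx1)).le
  have heq : Φ y₁ r = Φ y₂ r := le_antisymm hrA.2 hrev
  have hsg₁ := flow_semigroup φ M hM hφc hφpos hφM Φ hflow huniq hy₁ hr0 (by linarith : (0:ℝ) ≤ t - r)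
  have hsg₂ := flow_semigroup φ M hM hφc hφpos hφM Φ hflow huniq hy₂ hr0 (by linarith : (0:ℝ) ≤ t - r)
  rw [add_sub_cancel] at hsg₁ hsg₂
  rw [hsg₁, hsg₂, heq] at hcon
  exact absurd hcon (lt_irrefl _)

/-- for the flow `Φ` of a continuous positive vector field `φ ≤ M` on `ℝ₊`,
`Φ(y+h, u) - Φ(y, u) ≥ (m/M)·h` with `m = inf φ` on `[Φ(y,u), Φ(y,u)+h]`, and consequently
`∂Φ/∂y(y,u) ≥ (min_{[0, y+Mu]} φ)/M` whenever this derivative exists. -/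
theorem stmt5
    (φ : ℝ → ℝ) (M : ℝ) (hM : 0 < M)
    (hφc : Continuous φ) (hφpos : ∀ y, 0 ≤ y → 0 < φ y) (hφM : ∀ y, 0 ≤ y → φ y ≤ M)
    (Φ : ℝ → ℝ → ℝ)
    (hflow : ∀ y, 0 ≤ y → ∀ t, 0 ≤ t → Φ y t = y + ∫ s in (0:ℝ)..t, φ (Φ y s))
    (huniq : ∀ y, 0 ≤ y → ∀ g : ℝ → ℝ, ContinuousOn g (Set.Ici 0) →
      (∀ t, 0 ≤ t → g t = y + ∫ s in (0:ℝ)..t, φ (g s)) → ∀ t, 0 ≤ t → g t = Φ y t) :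
    (∀ y h u : ℝ, 0 < y → 0 < h → 0 < u →
      sInf (φ '' Set.Icc (Φ y u) (Φ y u + h)) / M * h ≤ Φ (y + h) u - Φ y u) ∧
    (∀ y u D : ℝ, 0 < y → 0 < u → HasDerivAt (fun z => Φ z u) D y →
      sInf (φ '' Set.Icc 0 (y + M * u)) / M ≤ D) := by
  have hΦ0 : ∀ y : ℝ, 0 < y → Φ y 0 = y := by
    intro y hy
    rw [hflow y hy.le 0 (le_refl 0), intervalIntegral.integral_same, add_zero]
  have part1 : ∀ y h u : ℝ, 0 < y → 0 < h → 0 < u →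
      sInf (φ '' Set.Icc (Φ y u) (Φ y u + h)) / M * h ≤ Φ (y + h) u - Φ y u := by
    intro y h u hy hh hu
    set c := Φ y u with hc
    set m := sInf (φ '' Set.Icc c (c + h)) with hm
    set k := h / M with hk
    have hk0 : 0 < k := div_pos hh hM
    have hMk : M * k = h := by rw [hk]; field_simp
    have hbdd : BddBelow (φ '' Set.Icc c (c + h)) :=
      (isCompact_Icc.image hφc).bddBelow
    have hΦk_le : Φ y k ≤ y + h := by
      have := flow_lip φ M hM hφc hφpos hφM Φ hflow hy (le_refl 0) hk0.le
      rw [hΦ0 y hy, sub_zero] at this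
      linarith
    have hΦk_pos : 0 < Φ y k :=
      lt_of_lt_of_le hy (flow_ge φ M hM hφc hφpos hφM Φ hflow hy hk0.le)
    have hmono : Φ (Φ y k) u ≤ Φ (y + h) u :=
      flow_mono φ M hM hφc hφpos hφM Φ hflow huniq hΦk_pos hΦk_le hu.le
    have hsg : Φ y (k + u) = Φ (Φ y k) u :=
      flow_semigroup φ M hM hφc hφpos hφM Φ hflow huniq hy hk0.le hu.le
    have hdiff : Φ y (u + k) = Φ y u + ∫ s in u..(u + k), φ (Φ y s) :=
      flow_diff φ M hM hφc hφpos hφM Φ hflow hy hu.le (by linarith)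
    have hIcc : ∀ s ∈ Set.Icc u (u + k), Φ y s ∈ Set.Icc c (c + h) := by
      intro s hs
      have hlow : c ≤ Φ y s := flow_incr φ M hM hφc hφpos hφM Φ hflow hy hu.le hs.1
      have hhigh : Φ y s ≤ Φ y u + M * (s - u) :=
        flow_lip φ M hM hφc hφpos hφM Φ hflow hy hu.le hs.1
      have : M * (s - u) ≤ M * k := by
        apply mul_le_mul_of_nonneg_left _ hM.le
        linarith [hs.2]
      exact ⟨hlow, by linarith⟩
    have hintlb : m * k ≤ ∫ s in u..(u + k), φ (Φ y s) := by
      have hsubint : uIcc u (u + k) ⊆ uIcc 0 (u + k) := by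
        rw [uIcc_of_le (by linarith : (0:ℝ) ≤ u + k), uIcc_of_le (by linarith : u ≤ u + k)]
        exact Icc_subset_Icc (by linarith) (le_refl _)
      have h2 : IntervalIntegrable (fun s => φ (Φ y s)) volume u (u + k) :=
        (flow_int φ M hM hφc hφpos hφM Φ hflow hy (u + k) (by linarith)).mono_set hsubint
      have hle : (∫ _ in u..(u + k), m) ≤ ∫ s in u..(u + k), φ (Φ y s) := by
        apply intervalIntegral.integral_mono_on (by linarith) intervalIntegrable_const h2
        intro x hx
        exact csInf_le hbdd ⟨Φ y x, hIcc x hx, rfl⟩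
      rw [intervalIntegral.integral_const, smul_eq_mul] at hle
      calc m * k = (u + k - u) * m := by ring
      _ ≤ _ := hle
    have hfinal : m / M * h = m * k := by
      rw [hk]; field_simp
    rw [hfinal]
    have hchain : Φ y (u + k) ≤ Φ (y + h) u := by
      rw [add_comm u k, hsg]; exact hmono
    linarith
  refine ⟨part1, ?_⟩
  intro y u D hy hu hD
  set c := Φ y u with hc
  have hc0 : 0 < c := lt_of_lt_of_le hy (flow_ge φ M hM hφc hφpos hφM Φ hflow hy hu.le)
  have hcle : c ≤ y + M * u := by
    have := flow_lip φ M hM hφc hφpos hφM Φ hflow hy (le_refl 0) hu.le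
    rw [hΦ0 y hy, sub_zero] at this
    exact this
  have hstep : ∀ h₀ : ℝ, 0 < h₀ → sInf (φ '' Set.Icc c (c + h₀)) / M ≤ D := by
    intro h₀ hh₀
    have hslope : Filter.Tendsto (slope (fun z => Φ z u) y) (nhdsWithin y (Set.Ioi y)) (nhds D) :=
      (hasDerivAt_iff_tendsto_slope.mp hD).mono_left
        (nhdsWithin_mono y (fun x hx => ne_of_gt hx))
    apply ge_of_tendsto hslope
    have hev : Set.Ioo y (y + h₀) ∈ nhdsWithin y (Set.Ioi y) :=
      Ioo_mem_nhdsGT_of_mem ⟨le_refl y, by linarith⟩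
    filter_upwards [hev] with x hx
    have hh : 0 < x - y := by linarith [hx.1]
    have hhle : x - y ≤ h₀ := by linarith [hx.2]
    have hp1 := part1 y (x - y) u hy hh hu
    rw [show y + (x - y) = x by ring] at hp1
    have hsub : sInf (φ '' Set.Icc c (c + h₀)) ≤ sInf (φ '' Set.Icc c (c + (x - y))) := by
      apply csInf_le_csInf ((isCompact_Icc.image hφc).bddBelow)
        (Set.Nonempty.image _ (Set.nonempty_Icc.mpr (by linarith)))
      exact Set.image_mono (Set.Icc_subset_Icc (le_refl c) (by linarith))
    have h1 : sInf (φ '' Set.Icc c (c + (x - y))) / M ≤ slope (fun z => Φ z u) y x := by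
      rw [slope_def_field]
      rw [le_div_iff₀ hh]
      exact hp1
    calc sInf (φ '' Set.Icc c (c + h₀)) / M
        ≤ sInf (φ '' Set.Icc c (c + (x - y))) / M := by gcongr
      _ ≤ _ := h1
  have hφcD : φ c ≤ D * M := by
    apply le_of_forall_pos_le_add
    intro ε hε
    obtain ⟨δ, hδ0, hδ⟩ := Metric.continuousAt_iff.mp hφc.continuousAt ε hε
    have hm : φ c - ε ≤ sInf (φ '' Set.Icc c (c + δ/2)) := by
      apply le_csInf (Set.Nonempty.image _ (Set.nonempty_Icc.mpr (by linarith)))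
      rintro b ⟨x, hx, rfl⟩
      have hdist : dist x c < δ := by
        rw [Real.dist_eq, abs_of_nonneg (by linarith [hx.1])]
        linarith [hx.2]
      have := hδ hdist
      rw [Real.dist_eq, abs_lt] at this
      linarith [this.1]
    have := hstep (δ/2) (by linarith)
    rw [div_le_iff₀ hM] at this
    linarith
  have hm₂ : sInf (φ '' Set.Icc 0 (y + M * u)) ≤ φ c :=
    csInf_le ((isCompact_Icc.image hφc).bddBelow) ⟨c, ⟨hc0.le, hcle⟩, rfl⟩
  rw [div_le_iff₀ hM]
  linarith
end

section
/- Let φ : ℝ₊ → ℝ be continuous with 0 < φ ≤ M, and Φ its flow as above. Then for all y > 0 and u > 0, whenever ∂Φ/∂y(y,u) exists, (min_{[0,y+Mu]} φ)/M ≤ ∂Φ/∂y(y,u) ≤ M/(min_{[0,y+Mu]} φ). -/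
open MeasureTheory

/-- two-sided bound on the spatial derivative of the flow of a continuous
vector field `0 < φ ≤ M`:
`(min_{[0,y+Mu]} φ)/M ≤ ∂Φ/∂y(y,u) ≤ M/(min_{[0,y+Mu]} φ)` whenever the derivative exists. -/
theorem stmt6
    (φ : ℝ → ℝ) (M : ℝ) (hM : 0 < M)
    (hφc : Continuous φ) (hφpos : ∀ y, 0 ≤ y → 0 < φ y) (hφM : ∀ y, 0 ≤ y → φ y ≤ M)
    (Φ : ℝ → ℝ → ℝ)
    (hflow : ∀ y, 0 ≤ y → ∀ t, 0 ≤ t → Φ y t = y + ∫ s in (0:ℝ)..t, φ (Φ y s))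
    (huniq : ∀ y, 0 ≤ y → ∀ g : ℝ → ℝ, ContinuousOn g (Set.Ici 0) →
      (∀ t, 0 ≤ t → g t = y + ∫ s in (0:ℝ)..t, φ (g s)) → ∀ t, 0 ≤ t → g t = Φ y t) :
    ∀ y u D : ℝ, 0 < y → 0 < u → HasDerivAt (fun z => Φ z u) D y →
      sInf (φ '' Set.Icc 0 (y + M * u)) / M ≤ D ∧
      D ≤ M / sInf (φ '' Set.Icc 0 (y + M * u)) := by
  -- extend φ to all of ℝ keeping positivity and the bound
  set ψ : ℝ → ℝ := fun z => φ (max z 0) with hψdef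
  have hψc : Continuous ψ := hφc.comp (continuous_id.max continuous_const)
  have hψpos : ∀ z, 0 < ψ z := fun z => hφpos _ (le_max_right _ _)
  have hψM : ∀ z, ψ z ≤ M := fun z => hφM _ (le_max_right _ _)
  have hψeq : ∀ z, 0 ≤ z → ψ z = φ z := fun z hz => by
    simp [hψdef, max_eq_left hz]
  -- G x = ∫₀ˣ dz/ψ(z)
  set G : ℝ → ℝ := fun x => ∫ z in (0:ℝ)..x, (ψ z)⁻¹ with hGdef
  have hinvc : Continuous fun z => (ψ z)⁻¹ := hψc.inv₀ fun z => (hψpos z).ne'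
  have hGd : ∀ x, HasDerivAt G (ψ x)⁻¹ x := fun x =>
    intervalIntegral.integral_hasDerivAt_right (hinvc.intervalIntegrable _ _)
      (hinvc.stronglyMeasurableAtFilter _ _) hinvc.continuousAt
  have hGmono : StrictMono G := by
    apply strictMono_of_deriv_pos
    intro x
    rw [(hGd x).deriv]
    exact inv_pos.mpr (hψpos x)
  -- G grows at least like x/M
  have hGgrow : ∀ a b : ℝ, a ≤ b → (b - a) / M ≤ G b - G a := by
    intro a b hab
    have hsub : G b - G a = ∫ z in a..b, (ψ z)⁻¹ :=
      intervalIntegral.integral_interval_sub_left (hinvc.intervalIntegrable _ _)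
        (hinvc.intervalIntegrable _ _)
    have hmono : ∫ z in a..b, (M)⁻¹ ≤ ∫ z in a..b, (ψ z)⁻¹ := by
      apply intervalIntegral.integral_mono_on hab
        (intervalIntegrable_const) (hinvc.intervalIntegrable _ _)
      intro z _
      exact inv_anti₀ (hψpos z) (hψM z)
    rw [hsub]
    calc (b - a) / M = ∫ z in a..b, (M)⁻¹ := by
          rw [intervalIntegral.integral_const, smul_eq_mul, div_eq_mul_inv]
      _ ≤ _ := hmono
  have hGtop : Filter.Tendsto G Filter.atTop Filter.atTop := by
    have hf : Filter.Tendsto (fun x : ℝ => G 0 + x / M) Filter.atTop Filter.atTop :=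
      Filter.tendsto_atTop_add_const_left _ _ (Filter.tendsto_id.atTop_div_const hM)
    apply Filter.tendsto_atTop_mono' _ _ hf
    filter_upwards [Filter.eventually_ge_atTop (0:ℝ)] with x hx
    have h := hGgrow 0 x hx
    rw [sub_zero] at h
    show G 0 + x / M ≤ G x
    linarith
  have hGbot : Filter.Tendsto G Filter.atBot Filter.atBot := by
    have hf : Filter.Tendsto (fun x : ℝ => G 0 + x / M) Filter.atBot Filter.atBot :=
      Filter.tendsto_atBot_add_const_left _ _ (Filter.tendsto_id.atBot_div_const hM)
    apply Filter.tendsto_atBot_mono' _ _ hf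
    filter_upwards [Filter.eventually_le_atBot (0:ℝ)] with x hx
    have h := hGgrow x 0 hx
    rw [zero_sub] at h
    show G x ≤ G 0 + x / M
    have : (-x) / M = -(x / M) := by ring
    linarith
  have hGcont : Continuous G := by
    apply continuous_iff_continuousAt.mpr
    intro x; exact (hGd x).continuousAt
  have hGsurj : Function.Surjective G := Continuous.surjective hGcont hGtop hGbot
  -- the order isomorphism and its inverse g₀
  set e : ℝ ≃o ℝ := StrictMono.orderIsoOfSurjective G hGmono hGsurj with hedef
  set g₀ : ℝ → ℝ := fun t => e.symm t with hg₀def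
  have hGg₀ : ∀ t, G (g₀ t) = t := fun t =>
    StrictMono.orderIsoOfSurjective_self_symm_apply G hGmono hGsurj t
  have hg₀G : ∀ x, g₀ (G x) = x := fun x =>
    StrictMono.orderIsoOfSurjective_symm_apply_self G hGmono hGsurj x
  have hg₀cont : Continuous g₀ := OrderIso.continuous e.symm
  have hg₀mono : Monotone g₀ := e.symm.monotone
  have hg₀d : ∀ a, HasDerivAt g₀ (ψ (g₀ a)) a := by
    intro a
    have h := HasDerivAt.of_local_left_inverse (f := G) (g := g₀)
      hg₀cont.continuousAt (hGd (g₀ a)) (inv_ne_zero (hψpos _).ne')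
      (Filter.Eventually.of_forall hGg₀)
    rwa [inv_inv] at h
  -- identification of the flow: Φ y t = g₀ (t + G y)
  have hkey : ∀ y : ℝ, 0 ≤ y → ∀ t : ℝ, 0 ≤ t → Φ y t = g₀ (t + G y) := by
    intro y hy
    set g : ℝ → ℝ := fun t => g₀ (t + G y) with hgdef
    have hg0 : g 0 = y := by simp [hgdef, hg₀G]
    have hgge : ∀ t, 0 ≤ t → y ≤ g t := by
      intro t ht
      have : g₀ (G y) ≤ g₀ (t + G y) := hg₀mono (by linarith)
      rwa [hg₀G] at this
    have hgd : ∀ t, HasDerivAt g (ψ (g t)) t := by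
      intro t
      have hi : HasDerivAt (fun t : ℝ => t + G y) 1 t := (hasDerivAt_id t).add_const _
      have := HasDerivAt.comp t (hg₀d (t + G y)) hi
      simpa [hgdef, Function.comp_def] using this
    have hgcont : Continuous g := hg₀cont.comp (continuous_id.add continuous_const)
    have heq : ∀ t, 0 ≤ t → g t = y + ∫ s in (0:ℝ)..t, φ (g s) := by
      intro t ht
      have hft : ∀ s ∈ Set.uIcc (0:ℝ) t, HasDerivAt g (φ (g s)) s := by
        intro s hs
        rw [Set.uIcc_of_le ht] at hs
        have := hgd s
        rwa [hψeq _ (le_trans hy (hgge s hs.1))] at this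
      have hint : IntervalIntegrable (fun s => φ (g s)) volume 0 t :=
        (hφc.comp hgcont).intervalIntegrable _ _
      have := intervalIntegral.integral_eq_sub_of_hasDerivAt hft hint
      rw [this, hg0]; ring
    intro t ht
    exact (huniq y hy g hgcont.continuousOn heq t ht).symm
  -- main argument
  intro y u D hy hu hD
  have hy' : (0:ℝ) ≤ y := hy.le
  -- the explicit formula near y
  set F : ℝ → ℝ := fun z => g₀ (u + G z) with hFdef
  have hFd : HasDerivAt F (ψ (F y) * (ψ y)⁻¹) y := by
    have hi : HasDerivAt (fun z : ℝ => u + G z) (ψ y)⁻¹ y := by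
      simpa using ((hGd y).const_add u)
    exact HasDerivAt.comp y (hg₀d (u + G y)) hi
  have hFeq : ∀ᶠ z in nhds y, Φ z u = F z := by
    filter_upwards [Filter.eventually_of_mem (Ioi_mem_nhds hy) fun z hz => hz] with z hz
    exact hkey z (le_of_lt hz) u hu.le
  have hD' : HasDerivAt (fun z => Φ z u) (ψ (F y) * (ψ y)⁻¹) y := by
    exact hFd.congr_of_eventuallyEq hFeq
  have hDval : D = ψ (F y) * (ψ y)⁻¹ := hD.unique hD'
  -- bounds for F y = Φ y u
  have hFy_ge : y ≤ F y := by
    have : g₀ (G y) ≤ g₀ (u + G y) := hg₀mono (by linarith)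
    rwa [hg₀G] at this
  have hFy_le : F y ≤ y + M * u := by
    have h1 : G (F y) = u + G y := hGg₀ _
    have h2 := hGgrow y (F y) hFy_ge
    rw [h1] at h2
    have := (div_le_iff₀ hM).mp (by linarith : (F y - y) / M ≤ u)
    linarith
  have hFy0 : (0:ℝ) ≤ F y := le_trans hy' hFy_ge
  -- infimum facts
  set K : Set ℝ := Set.Icc 0 (y + M * u) with hKdef
  have hKne : K.Nonempty := ⟨0, le_refl 0, by positivity⟩
  have hKcomp : IsCompact K := isCompact_Icc
  obtain ⟨x₀, hx₀K, hx₀⟩ := hKcomp.exists_sInf_image_eq hKne hφc.continuousOn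
  set m : ℝ := sInf (φ '' K) with hmdef
  have hmpos : 0 < m := hx₀ ▸ hφpos x₀ hx₀K.1
  have hmM : m ≤ M := hx₀ ▸ hφM x₀ hx₀K.1
  have hbdd : BddBelow (φ '' K) := ⟨0, by rintro _ ⟨x, hx, rfl⟩; exact (hφpos x hx.1).le⟩
  have hmle : ∀ x ∈ K, m ≤ φ x := fun x hx => csInf_le hbdd ⟨x, hx, rfl⟩
  -- pull everything together
  have hyK : y ∈ K := ⟨hy', by nlinarith⟩
  have hFyK : F y ∈ K := ⟨hFy0, hFy_le⟩
  have hDform : D = φ (F y) / φ y := by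
    rw [hDval, hψeq _ hFy0, hψeq _ hy', div_eq_mul_inv]
  have hφy_pos : 0 < φ y := hφpos y hy'
  have hφy_le : φ y ≤ M := hφM y hy'
  have hφFy_pos : 0 < φ (F y) := hφpos _ hFy0
  have hφFy_le : φ (F y) ≤ M := hφM _ hFy0
  constructor
  · rw [hDform]
    exact div_le_div₀ (hφFy_pos.le) (hmle _ hFyK) hφy_pos hφy_le
  · rw [hDform]
    exact div_le_div₀ hM.le hφFy_le hmpos (hmle _ hyK)
end

section
/- In the two-patch constant growth model with uniform multiplicative transfers and invariant probability π equal to a product structure where the relative population S = X¹/(X¹+X²) follows a Beta(θ₂₁/λ, θ₁₂/λ) distribution: the Beta(a,b) density f(s) ∝ s^{a-1}(1-s)^{b-1} on (0,1) is the unique stationary density of the pure-jump Markov process S on [0,1] with generator 𝒜g(s) = θ₁₂·∫₀¹ (g(s - ξs) - g(s)) dξ + θ₂₁·∫₀¹ (g(s + ξ(1-s)) - g(s)) dξ, in the sense that ∫ 𝒜g dπ = 0 for all C¹ test functions g, where a = θ₂₁/λ, b = θ₁₂/λ for an appropriate normalization λ. -/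
open MeasureTheory intervalIntegral Set Filter

lemma betaReal_left {a : ℝ} (ha : 0 < a) (b : ℝ) :
    IntervalIntegrable (fun x : ℝ => x ^ (a - 1) * (1 - x) ^ (b - 1)) volume 0 (1/2) := by
  apply IntervalIntegrable.mul_continuousOn
  · exact intervalIntegrable_rpow' (by linarith)
  · apply continuousOn_of_forall_continuousAt
    intro x hx
    rw [uIcc_of_le (by norm_num : (0:ℝ) ≤ 1/2)] at hx
    exact (Real.continuousAt_rpow_const (1 - x) (b-1)
      (Or.inl (by intro h; rw [sub_eq_zero] at h; nlinarith [hx.2]))).comp (by fun_prop)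

lemma betaReal {a b : ℝ} (ha : 0 < a) (hb : 0 < b) :
    IntervalIntegrable (fun x : ℝ => x ^ (a - 1) * (1 - x) ^ (b - 1)) volume 0 1 := by
  refine (betaReal_left ha b).trans ?_
  rw [IntervalIntegrable.iff_comp_neg]
  convert ((betaReal_left hb a).comp_add_right 1).symm using 1
  · ext1 x
    rw [mul_comm]
    congr 1
    · congr 1; ring
    · congr 1; ring
  · norm_num
  · norm_num

/-- the Beta(θ₂₁/λ, θ₁₂/λ) density (λ = θ₁₂ + θ₂₁) is stationary for the
relative-population jump process on [0,1] with generator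
`𝒜g(s) = θ₁₂∫₀¹(g(s-ξs)-g(s))dξ + θ₂₁∫₀¹(g(s+ξ(1-s))-g(s))dξ`:
`∫₀¹ 𝒜g(s)·s^{a-1}(1-s)^{b-1} ds = 0` for every `C¹` test function `g`. -/
theorem stmt14
    (θ12 θ21 : ℝ) (h12 : 0 < θ12) (h21 : 0 < θ21)
    (a b : ℝ) (ha : a = θ21 / (θ12 + θ21)) (hb : b = θ12 / (θ12 + θ21))
    (g : ℝ → ℝ) (hg : ContDiff ℝ 1 g) :
    ∫ s in (0:ℝ)..1,
      (θ12 * (∫ ξ in (0:ℝ)..1, (g (s - ξ * s) - g s)) +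
       θ21 * (∫ ξ in (0:ℝ)..1, (g (s + ξ * (1 - s)) - g s))) *
        (Real.rpow s (a - 1) * Real.rpow (1 - s) (b - 1)) = 0 := by
  have hrw : ∀ x y : ℝ, Real.rpow x y = x ^ y := fun _ _ => rfl
  simp only [hrw]
  have hgc : Continuous g := hg.continuous
  have hL : 0 < θ12 + θ21 := by linarith
  set L : ℝ := θ12 + θ21 with hLdef
  have ha0 : 0 < a := by rw [ha]; positivity
  have hb0 : 0 < b := by rw [hb]; positivity
  have hab1 : a + b = 1 := by rw [ha, hb]; field_simp; ring
  have ha1 : a < 1 := by linarith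
  have hb1 : b < 1 := by linarith
  have hθ12 : θ12 = b * L := by rw [hb]; field_simp
  have hθ21 : θ21 = a * L := by rw [ha]; field_simp
  -- the antiderivative
  set G : ℝ → ℝ := fun s => ∫ u in (0:ℝ)..s, g u with hGdef
  have hGderiv : ∀ s : ℝ, HasDerivAt G (g s) s := fun s =>
    integral_hasDerivAt_right (hgc.intervalIntegrable _ _)
      (hgc.stronglyMeasurableAtFilter _ _) hgc.continuousAt
  set G1 : ℝ := G 1 with hG1def
  set H : ℝ → ℝ := fun s => L * (s ^ (a-1) * (1-s) ^ (b-1) * (s * G1 - G s)) with hHdef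
  set F : ℝ → ℝ := fun s =>
      (θ12 * (∫ ξ in (0:ℝ)..1, (g (s - ξ * s) - g s)) +
       θ21 * (∫ ξ in (0:ℝ)..1, (g (s + ξ * (1 - s)) - g s))) *
        (s ^ (a - 1) * (1 - s) ^ (b - 1)) with hFdef
  -- inner integral computations
  have hA : ∀ s : ℝ, s ≠ 0 → (∫ ξ in (0:ℝ)..1, (g (s - ξ * s) - g s)) = s⁻¹ * G s - g s := by
    intro s hs
    have h1 : (∫ ξ in (0:ℝ)..1, g (s - ξ * s)) = s⁻¹ * G s := by
      have := integral_comp_mul_right (fun u => g (s - u)) hs (a := 0) (b := 1)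
      simp only [zero_mul, one_mul] at this
      rw [this, integral_comp_sub_left (fun u => g u) s]
      simp [hGdef, smul_eq_mul]
    have hc1 : Continuous fun ξ : ℝ => g (s - ξ * s) := hgc.comp (by fun_prop)
    rw [intervalIntegral.integral_sub (hc1.intervalIntegrable 0 1)
      (continuous_const.intervalIntegrable 0 1), h1]
    simp
  have hB : ∀ s : ℝ, s ≠ 1 → (∫ ξ in (0:ℝ)..1, (g (s + ξ * (1 - s)) - g s))
      = (1-s)⁻¹ * (G1 - G s) - g s := by
    intro s hs
    have hs' : (1:ℝ) - s ≠ 0 := sub_ne_zero.mpr (Ne.symm hs)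
    have h1 : (∫ ξ in (0:ℝ)..1, g (s + ξ * (1 - s))) = (1-s)⁻¹ * (G1 - G s) := by
      have := integral_comp_mul_right (fun u => g (s + u)) hs' (a := 0) (b := 1)
      simp only [zero_mul, one_mul] at this
      rw [this, integral_comp_add_left (fun u => g u) s]
      have h2 : s + (1 - s) = 1 := by ring
      have h3 : s + 0 = s := by ring
      rw [h2, h3]
      rw [← integral_interval_sub_left (hgc.intervalIntegrable 0 1) (hgc.intervalIntegrable 0 s)]
      simp [hGdef, hG1def, smul_eq_mul]
    have hc1 : Continuous fun ξ : ℝ => g (s + ξ * (1 - s)) := hgc.comp (by fun_prop)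
    rw [intervalIntegral.integral_sub (hc1.intervalIntegrable 0 1)
      (continuous_const.intervalIntegrable 0 1), h1]
    simp
  -- derivative of H
  have hderiv : ∀ s ∈ Ioo (0:ℝ) 1, HasDerivAt H (F s) s := by
    intro s hs
    obtain ⟨hs0, hs1⟩ := hs
    have hs1' : (0:ℝ) < 1 - s := by linarith
    have h1 : HasDerivAt (fun x : ℝ => x ^ (a-1)) ((a-1) * s^(a-1-1)) s :=
      Real.hasDerivAt_rpow_const (Or.inl hs0.ne')
    have h2 : HasDerivAt (fun x : ℝ => (1-x) ^ (b-1)) (((b-1) * (1-s)^(b-1-1)) * (-1)) s := by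
      exact (Real.hasDerivAt_rpow_const (p := b-1) (Or.inl hs1'.ne')).comp s
        ((hasDerivAt_id s).const_sub 1)
    have h3 : HasDerivAt (fun x : ℝ => x * G1 - G x) (G1 - g s) s := by
      have h := ((hasDerivAt_id s).mul_const G1).sub (hGderiv s)
      rw [one_mul] at h
      exact h
    have hH := (((h1.mul h2).mul h3).const_mul L)
    have key : L * (((a-1) * s^(a-1-1) * (1-s)^(b-1) + s^(a-1) * ((b-1) * (1-s)^(b-1-1) * (-1)))
        * (s * G1 - G s) + s^(a-1) * (1-s)^(b-1) * (G1 - g s)) = F s := by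
      rw [hFdef]
      simp only []
      rw [hA s hs0.ne', hB s hs1.ne]
      have e1 : s ^ (a-1-1) = s ^ (a-1) / s := by
        rw [show a-1-1 = (a-1) - 1 by ring, Real.rpow_sub hs0, Real.rpow_one]
      have e2 : (1-s) ^ (b-1-1) = (1-s) ^ (b-1) / (1-s) := by
        rw [show b-1-1 = (b-1) - 1 by ring, Real.rpow_sub hs1', Real.rpow_one]
      rw [e1, e2]
      set A : ℝ := s ^ (a-1) with hAdef
      set B2 : ℝ := (1-s) ^ (b-1) with hB2def
      rw [hθ12, hθ21, show b = 1 - a from by linarith]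
      have hLne : L ≠ 0 := hL.ne'
      field_simp
      ring
    exact key ▸ hH
  -- bound on g over [0,1]
  obtain ⟨M, hM⟩ := isCompact_Icc.exists_bound_of_continuousOn
    (hgc.continuousOn : ContinuousOn g (Icc (0:ℝ) 1))
  -- integrability of the weight
  have hwInt : IntegrableOn (fun x : ℝ => x ^ (a-1) * (1-x) ^ (b-1)) (Ioo 0 1) volume := by
    have h := intervalIntegrable_iff.mp (betaReal ha0 hb0)
    rw [uIoc_of_le (by norm_num : (0:ℝ) ≤ 1)] at h
    exact h.mono_set Ioo_subset_Ioc_self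
  -- the continuous version of F on (0,1)
  set Ft : ℝ → ℝ := fun s =>
      (θ12 * (s⁻¹ * G s - g s) + θ21 * ((1-s)⁻¹ * (G1 - G s) - g s)) *
        (s ^ (a - 1) * (1 - s) ^ (b - 1)) with hFtdef
  have hGc : Continuous G := continuous_iff_continuousAt.mpr fun s => (hGderiv s).continuousAt
  have hFtc : ContinuousOn Ft (Ioo (0:ℝ) 1) := by
    intro x hx
    apply ContinuousAt.continuousWithinAt
    have hx0 : x ≠ 0 := ne_of_gt hx.1
    have hx1 : (1:ℝ) - x ≠ 0 := sub_ne_zero.mpr (ne_of_gt hx.2)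
    apply ContinuousAt.mul
    · exact ((continuousAt_const.mul (((continuousAt_id.inv₀ hx0).mul hGc.continuousAt).sub
        hgc.continuousAt)).add (continuousAt_const.mul
        ((((continuousAt_const.sub continuousAt_id).inv₀ hx1).mul
          (continuousAt_const.sub hGc.continuousAt)).sub hgc.continuousAt)))
    · exact (Real.continuousAt_rpow_const x (a-1) (Or.inl hx0)).mul
        (((Real.continuousAt_rpow_const (1-x) (b-1) (Or.inl hx1)).comp
          (continuousAt_const.sub continuousAt_id)))
  have hEqOn : ∀ s ∈ Ioo (0:ℝ) 1, F s = Ft s := by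
    intro s hs
    rw [hFdef, hFtdef]
    simp only []
    rw [hA s hs.1.ne', hB s hs.2.ne]
  have hae : F =ᵐ[volume.restrict (Ioo (0:ℝ) 1)] Ft := by
    filter_upwards [ae_restrict_mem measurableSet_Ioo] with s hs using hEqOn s hs
  have hFmeas : AEStronglyMeasurable F (volume.restrict (Ioo (0:ℝ) 1)) :=
    (hFtc.aestronglyMeasurable measurableSet_Ioo).congr hae.symm
  have hbnd : ∀ᵐ s ∂(volume.restrict (Ioo (0:ℝ) 1)),
      ‖F s‖ ≤ (θ12 * (2*M) + θ21 * (2*M)) * (s ^ (a-1) * (1-s) ^ (b-1)) := by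
    filter_upwards [ae_restrict_mem measurableSet_Ioo] with s hs
    obtain ⟨hs0, hs1⟩ := hs
    have i1 : |∫ ξ in (0:ℝ)..1, (g (s - ξ * s) - g s)| ≤ 2*M := by
      have h := intervalIntegral.norm_integral_le_of_norm_le_const (C := 2*M)
        (f := fun ξ => g (s - ξ * s) - g s) (a := 0) (b := 1) ?_
      · simpa using h
      · intro ξ hξ
        rw [uIoc_of_le (by norm_num : (0:ℝ) ≤ 1)] at hξ
        have hmem : s - ξ * s ∈ Icc (0:ℝ) 1 :=
          ⟨by nlinarith [hξ.1, hξ.2], by nlinarith [hξ.1, hξ.2]⟩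
        calc ‖g (s - ξ * s) - g s‖ ≤ ‖g (s - ξ * s)‖ + ‖g s‖ := norm_sub_le _ _
        _ ≤ M + M := add_le_add (hM _ hmem) (hM _ ⟨hs0.le, hs1.le⟩)
        _ = 2*M := by ring
    have i2 : |∫ ξ in (0:ℝ)..1, (g (s + ξ * (1 - s)) - g s)| ≤ 2*M := by
      have h := intervalIntegral.norm_integral_le_of_norm_le_const (C := 2*M)
        (f := fun ξ => g (s + ξ * (1 - s)) - g s) (a := 0) (b := 1) ?_
      · simpa using h
      · intro ξ hξ
        rw [uIoc_of_le (by norm_num : (0:ℝ) ≤ 1)] at hξ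
        have hmem : s + ξ * (1 - s) ∈ Icc (0:ℝ) 1 :=
          ⟨by nlinarith [hξ.1, hξ.2], by nlinarith [hξ.1, hξ.2]⟩
        calc ‖g (s + ξ * (1 - s)) - g s‖ ≤ ‖g (s + ξ * (1 - s))‖ + ‖g s‖ := norm_sub_le _ _
        _ ≤ M + M := add_le_add (hM _ hmem) (hM _ ⟨hs0.le, hs1.le⟩)
        _ = 2*M := by ring
    have hw0 : (0:ℝ) ≤ s ^ (a-1) * (1-s) ^ (b-1) :=
      mul_nonneg (Real.rpow_nonneg hs0.le _) (Real.rpow_nonneg (by linarith) _)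
    rw [hFdef]
    simp only []
    rw [Real.norm_eq_abs, abs_mul, abs_of_nonneg hw0]
    apply mul_le_mul_of_nonneg_right _ hw0
    calc |θ12 * (∫ ξ in (0:ℝ)..1, (g (s - ξ * s) - g s)) +
          θ21 * (∫ ξ in (0:ℝ)..1, (g (s + ξ * (1 - s)) - g s))|
        ≤ |θ12 * (∫ ξ in (0:ℝ)..1, (g (s - ξ * s) - g s))| +
          |θ21 * (∫ ξ in (0:ℝ)..1, (g (s + ξ * (1 - s)) - g s))| := abs_add_le _ _
      _ = θ12 * |∫ ξ in (0:ℝ)..1, (g (s - ξ * s) - g s)| +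
          θ21 * |∫ ξ in (0:ℝ)..1, (g (s + ξ * (1 - s)) - g s)| := by
          rw [abs_mul, abs_mul, abs_of_pos h12, abs_of_pos h21]
      _ ≤ θ12 * (2*M) + θ21 * (2*M) :=
          add_le_add (mul_le_mul_of_nonneg_left i1 h12.le) (mul_le_mul_of_nonneg_left i2 h21.le)
  have hFint : IntegrableOn F (Ioo (0:ℝ) 1) volume :=
    (hwInt.const_mul (θ12 * (2*M) + θ21 * (2*M))).mono' hFmeas hbnd
  have hint : IntervalIntegrable F volume 0 1 := by
    rw [intervalIntegrable_iff, uIoc_of_le (by norm_num : (0:ℝ) ≤ 1)]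
    exact (integrableOn_Ioc_iff_integrableOn_Ioo).mpr hFint
  -- bounds on G
  have hGb : ∀ s ∈ Ioo (0:ℝ) 1, |G s| ≤ M * s := by
    intro s hs
    have h := intervalIntegral.norm_integral_le_of_norm_le_const (C := M)
      (f := g) (a := 0) (b := s) ?_
    · rw [hGdef]
      simpa [abs_of_pos hs.1] using h
    · intro u hu
      rw [uIoc_of_le hs.1.le] at hu
      exact hM u ⟨hu.1.le, by linarith [hu.2, hs.2]⟩
  have hG1b : ∀ s ∈ Ioo (0:ℝ) 1, |G1 - G s| ≤ M * (1 - s) := by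
    intro s hs
    have heq : G1 - G s = ∫ u in s..1, g u :=
      integral_interval_sub_left (hgc.intervalIntegrable 0 1) (hgc.intervalIntegrable 0 s)
    rw [heq]
    have h := intervalIntegral.norm_integral_le_of_norm_le_const (C := M)
      (f := g) (a := s) (b := 1) ?_
    · rw [abs_of_pos (by linarith [hs.2] : (0:ℝ) < 1 - s)] at h
      simpa using h
    · intro u hu
      rw [uIoc_of_le hs.2.le] at hu
      exact hM u ⟨by linarith [hu.1, hs.1], hu.2⟩
  -- limit at 0⁺
  have hlim0 : Filter.Tendsto H (nhdsWithin 0 (Ioi 0)) (nhds 0) := by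
    apply squeeze_zero_norm' (a := fun s => (L * (|G1| + M)) * (s ^ a * (1-s) ^ (b-1)))
    · filter_upwards [Ioo_mem_nhdsGT_of_mem (⟨le_refl (0:ℝ), zero_lt_one⟩ : (0:ℝ) ∈ Ico (0:ℝ) 1)]
        with s hs
      obtain ⟨hs0, hs1⟩ := hs
      have hP : (0:ℝ) ≤ s ^ (a-1) := Real.rpow_nonneg hs0.le _
      have hQ : (0:ℝ) ≤ (1-s) ^ (b-1) := Real.rpow_nonneg (by linarith) _
      have hX : |s * G1 - G s| ≤ s * (|G1| + M) := by
        calc |s * G1 - G s| ≤ |s * G1| + |G s| := abs_sub _ _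
        _ ≤ s * |G1| + M * s := add_le_add (by rw [abs_mul, abs_of_pos hs0]) (hGb s ⟨hs0, hs1⟩)
        _ = s * (|G1| + M) := by ring
      have hsa : s ^ a = s ^ (a-1) * s := by
        have h := Real.rpow_add_one hs0.ne' (a-1)
        rwa [sub_add_cancel] at h
      rw [hHdef]
      simp only []
      rw [Real.norm_eq_abs, abs_mul, abs_of_pos hL, abs_mul, abs_mul,
        abs_of_nonneg hP, abs_of_nonneg hQ, hsa]
      have key2 : s ^ (a-1) * (1-s) ^ (b-1) * |s * G1 - G s|
          ≤ (|G1| + M) * (s ^ (a-1) * s * ((1-s) ^ (b-1))) := by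
        nlinarith [mul_nonneg (mul_nonneg hP hQ) (sub_nonneg.mpr hX),
          mul_nonneg hP hQ, abs_nonneg (s * G1 - G s)]
      calc L * (s ^ (a-1) * (1-s) ^ (b-1) * |s * G1 - G s|)
          ≤ L * ((|G1| + M) * (s ^ (a-1) * s * ((1-s) ^ (b-1)))) :=
            mul_le_mul_of_nonneg_left key2 hL.le
        _ = L * (|G1| + M) * (s ^ (a-1) * s * (1-s) ^ (b-1)) := by ring
    · have hc : ContinuousAt (fun s : ℝ => (L * (|G1| + M)) * (s ^ a * (1-s) ^ (b-1))) 0 := by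
        apply ContinuousAt.mul continuousAt_const
        exact (Real.continuousAt_rpow_const 0 a (Or.inr ha0.le)).mul
          ((Real.continuousAt_rpow_const (1-0) (b-1) (Or.inl (by norm_num))).comp
            (continuousAt_const.sub continuousAt_id))
      have hval : (L * (|G1| + M)) * ((0:ℝ) ^ a * (1-(0:ℝ)) ^ (b-1)) = 0 := by
        rw [Real.zero_rpow ha0.ne']
        ring
      have ht := hc.tendsto.mono_left (nhdsWithin_le_nhds (s := Ioi (0:ℝ)))
      rwa [hval] at ht
  -- limit at 1⁻
  have hlim1 : Filter.Tendsto H (nhdsWithin 1 (Iio 1)) (nhds 0) := by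
    apply squeeze_zero_norm' (a := fun s => (L * (|G1| + M)) * (s ^ (a-1) * (1-s) ^ b))
    · filter_upwards [Ioo_mem_nhdsLT_of_mem (⟨zero_lt_one, le_refl (1:ℝ)⟩ : (1:ℝ) ∈ Ioc (0:ℝ) 1)]
        with s hs
      obtain ⟨hs0, hs1⟩ := hs
      have hs1' : (0:ℝ) < 1 - s := by linarith
      have hP : (0:ℝ) ≤ s ^ (a-1) := Real.rpow_nonneg hs0.le _
      have hQ : (0:ℝ) ≤ (1-s) ^ (b-1) := Real.rpow_nonneg hs1'.le _
      have hX : |s * G1 - G s| ≤ (1-s) * (|G1| + M) := by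
        have hrw2 : s * G1 - G s = (G1 - G s) - (1-s) * G1 := by ring
        rw [hrw2]
        calc |(G1 - G s) - (1-s) * G1| ≤ |G1 - G s| + |(1-s) * G1| := abs_sub _ _
        _ ≤ M * (1-s) + (1-s) * |G1| := add_le_add (hG1b s ⟨hs0, hs1⟩)
            (by rw [abs_mul, abs_of_pos hs1'])
        _ = (1-s) * (|G1| + M) := by ring
      have hsb : (1-s) ^ b = (1-s) ^ (b-1) * (1-s) := by
        have h := Real.rpow_add_one hs1'.ne' (b-1)
        rwa [sub_add_cancel] at h
      rw [hHdef]
      simp only []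
      rw [Real.norm_eq_abs, abs_mul, abs_of_pos hL, abs_mul, abs_mul,
        abs_of_nonneg hP, abs_of_nonneg hQ, hsb]
      have key2 : s ^ (a-1) * (1-s) ^ (b-1) * |s * G1 - G s|
          ≤ (|G1| + M) * (s ^ (a-1) * ((1-s) ^ (b-1) * (1-s))) := by
        nlinarith [mul_nonneg (mul_nonneg hP hQ) (sub_nonneg.mpr hX),
          mul_nonneg hP hQ, abs_nonneg (s * G1 - G s)]
      calc L * (s ^ (a-1) * (1-s) ^ (b-1) * |s * G1 - G s|)
          ≤ L * ((|G1| + M) * (s ^ (a-1) * ((1-s) ^ (b-1) * (1-s)))) :=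
            mul_le_mul_of_nonneg_left key2 hL.le
        _ = L * (|G1| + M) * (s ^ (a-1) * ((1-s) ^ (b-1) * (1-s))) := by ring
    · have hc : ContinuousAt (fun s : ℝ => (L * (|G1| + M)) * (s ^ (a-1) * (1-s) ^ b)) 1 := by
        apply ContinuousAt.mul continuousAt_const
        exact (Real.continuousAt_rpow_const 1 (a-1) (Or.inl one_ne_zero)).mul
          ((Real.continuousAt_rpow_const (1-1) b (Or.inr hb0.le)).comp
            (continuousAt_const.sub continuousAt_id))
      have hval : (L * (|G1| + M)) * ((1:ℝ) ^ (a-1) * (1-(1:ℝ)) ^ b) = 0 := by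
        rw [show (1:ℝ) - 1 = 0 by ring, Real.zero_rpow hb0.ne']
        ring
      have ht := hc.tendsto.mono_left (nhdsWithin_le_nhds (s := Iio (1:ℝ)))
      rwa [hval] at ht
  have hfinal := integral_eq_sub_of_hasDerivAt_of_tendsto (show (0:ℝ) < 1 by norm_num)
    hderiv hint hlim0 hlim1
  simpa using hfinal
end
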